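/- Given a Λ-interleaving (M, N, φ, ψ), the assignment V(i) = M(i), V(i') = N(i), V(j ≥ i) = M(j ≥ i), V(j' ≥ i') = N(j ≥ i), V(j' ≥ i) = N(j ≥ Λi)∘φ(i), V(j ≥ i') = M(j ≥ Λi)∘ψ(i) defines a functor V : Σ_Λ P → D; in particular functoriality holds in the 'swap-swap' case: for k ≥ j' ≥ i in Σ_Λ P, V(k ≥ j')∘V(j' ≥ i) = V(k ≥ i). -/

import Mathlib

open CategoryTheory

/-- A translation of a proset `P`, bundled. -/
structure Translation (P : Type) [Preorder P] where
  toFun : P → P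
  mono : Monotone toFun
  le_self : ∀ x, x ≤ toFun x

variable {P : Type} [Preorder P]

/-- The shoelace `Σ_Λ P`: two copies of `P`. -/
def Shoe (T : Translation P) : Type := P ⊕ P

/-- The left copy of `P` inside `Σ_Λ P`. -/
def Shoe.l {T : Translation P} (i : P) : Shoe T := Sum.inl i

/-- The right copy of `P` inside `Σ_Λ P` (the "primed" copy). -/
def Shoe.r {T : Translation P} (i : P) : Shoe T := Sum.inr i

/-- The shoelace preorder. -/
instance {T : Translation P} : Preorder (Shoe T) where
  le x y := match x, y with
    | Sum.inl i, Sum.inl j => i ≤ j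
    | Sum.inr i, Sum.inr j => i ≤ j
    | Sum.inl i, Sum.inr j => T.toFun i ≤ j
    | Sum.inr i, Sum.inl j => T.toFun i ≤ j
  le_refl x := by cases x <;> exact le_refl _
  le_trans x y z h1 h2 := by
    rcases x with i | i <;> rcases y with j | j <;> rcases z with k | k
    · exact le_trans h1 h2
    · exact le_trans (T.mono h1) h2
    · exact le_trans (T.le_self i) (le_trans h1 (le_trans (T.le_self j) h2))
    · exact le_trans h1 h2
    · exact le_trans h1 h2
    · exact le_trans (T.le_self i) (le_trans h1 (le_trans (T.le_self j) h2))
    · exact le_trans (T.mono h1) h2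
    · exact le_trans h1 h2

lemma Shoe.l_le_l {T : Translation P} {i j : P} (h : i ≤ j) :
    (Shoe.l i : Shoe T) ≤ Shoe.l j := h

lemma Shoe.r_le_r {T : Translation P} {i j : P} (h : i ≤ j) :
    (Shoe.r i : Shoe T) ≤ Shoe.r j := h

lemma Shoe.l_le_r {T : Translation P} {i j : P} (h : T.toFun i ≤ j) :
    (Shoe.l i : Shoe T) ≤ Shoe.r j := h

lemma Shoe.r_le_l {T : Translation P} {i j : P} (h : T.toFun i ≤ j) :
    (Shoe.r i : Shoe T) ≤ Shoe.l j := h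

section Aux

variable {D : Type*} [Category D] (T : Translation P) (M N : P ⥤ D)
  (φ : ∀ x, M.obj x ⟶ N.obj (T.toFun x)) (ψ : ∀ x, N.obj x ⟶ M.obj (T.toFun x))

/-- Object part of the shoelace functor. -/
def shoeObj : Shoe T → D
  | Sum.inl i => M.obj i
  | Sum.inr i => N.obj i

/-- Morphism part of the shoelace functor. -/
def shoeMap : ∀ {x y : Shoe T}, x ≤ y → (shoeObj T M N x ⟶ shoeObj T M N y)
  | Sum.inl _, Sum.inl _, h => M.map (homOfLE h)
  | Sum.inl i, Sum.inr _, h => φ i ≫ N.map (homOfLE h)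
  | Sum.inr i, Sum.inl _, h => ψ i ≫ M.map (homOfLE h)
  | Sum.inr _, Sum.inr _, h => N.map (homOfLE h)

end Aux

/-- Given a `Λ`-interleaving `(M, N, φ, ψ)`, the assignment
`V(i) = M(i)`, `V(i') = N(i)`, `V(j ≥ i) = M(j ≥ i)`, `V(j' ≥ i') = N(j ≥ i)`,
`V(j' ≥ i) = N(j ≥ Λi) ∘ φ(i)`, `V(j ≥ i') = M(j ≥ Λi) ∘ ψ(i)` defines a functor
`V : Σ_Λ P ⥤ D`; in particular the swap-swap functoriality
`V(k ≥ j') ∘ V(j' ≥ i) = V(k ≥ i)` holds. -/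
theorem interleaving_defines_shoelace_functor {D : Type*} [Category D]
    (T : Translation P) (M N : P ⥤ D)
    (φ : ∀ x, M.obj x ⟶ N.obj (T.toFun x)) (ψ : ∀ x, N.obj x ⟶ M.obj (T.toFun x))
    (natφ : ∀ x y (h : x ≤ y),
      M.map (homOfLE h) ≫ φ y = φ x ≫ N.map (homOfLE (T.mono h)))
    (natψ : ∀ x y (h : x ≤ y),
      N.map (homOfLE h) ≫ ψ y = ψ x ≫ M.map (homOfLE (T.mono h)))
    (intφψ : ∀ x, φ x ≫ ψ (T.toFun x) =
      M.map (homOfLE ((T.le_self x).trans (T.le_self (T.toFun x)))))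
    (intψφ : ∀ x, ψ x ≫ φ (T.toFun x) =
      N.map (homOfLE ((T.le_self x).trans (T.le_self (T.toFun x))))) :
    ∃ (V : Shoe T ⥤ D)
      (hl : ∀ i, V.obj (Shoe.l i) = M.obj i)
      (hr : ∀ i, V.obj (Shoe.r i) = N.obj i),
      (∀ i j (h : i ≤ j), V.map (homOfLE (Shoe.l_le_l h)) =
        eqToHom (hl i) ≫ M.map (homOfLE h) ≫ eqToHom (hl j).symm) ∧
      (∀ i j (h : i ≤ j), V.map (homOfLE (Shoe.r_le_r h)) =
        eqToHom (hr i) ≫ N.map (homOfLE h) ≫ eqToHom (hr j).symm) ∧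
      (∀ i j (h : T.toFun i ≤ j), V.map (homOfLE (Shoe.l_le_r h)) =
        eqToHom (hl i) ≫ φ i ≫ N.map (homOfLE h) ≫ eqToHom (hr j).symm) ∧
      (∀ i j (h : T.toFun i ≤ j), V.map (homOfLE (Shoe.r_le_l h)) =
        eqToHom (hr i) ≫ ψ i ≫ M.map (homOfLE h) ≫ eqToHom (hl j).symm) ∧
      (∀ i j k (h1 : T.toFun i ≤ j) (h2 : T.toFun j ≤ k),
        V.map (homOfLE (Shoe.l_le_r h1)) ≫ V.map (homOfLE (Shoe.r_le_l h2))
          = V.map (homOfLE (le_trans (Shoe.l_le_r h1) (Shoe.r_le_l h2)))) := by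
  have comp : ∀ {x y z : Shoe T} (h1 : x ≤ y) (h2 : y ≤ z),
      shoeMap T M N φ ψ h1 ≫ shoeMap T M N φ ψ h2
        = shoeMap T M N φ ψ (h1.trans h2) := by
    rintro (i | i) (j | j) (k | k) h1 h2 <;>
      simp only [shoeMap, shoeObj, Category.assoc]
    · -- l l l
      rw [← M.map_comp, homOfLE_comp]
    · -- l l r
      slice_lhs 1 2 => rw [natφ i j h1]
      simp only [Category.assoc, ← N.map_comp, homOfLE_comp]
    · -- l r l
      slice_lhs 2 3 => rw [natψ _ j h1]
      slice_lhs 1 2 => rw [intφψ i]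
      simp only [Category.assoc, ← M.map_comp, homOfLE_comp]
    · -- l r r
      rw [← N.map_comp, homOfLE_comp]
    · -- r l l
      rw [← M.map_comp, homOfLE_comp]
    · -- r l r
      slice_lhs 2 3 => rw [natφ _ j h1]
      slice_lhs 1 2 => rw [intψφ i]
      simp only [Category.assoc, ← N.map_comp, homOfLE_comp]
    · -- r r l
      slice_lhs 1 2 => rw [natψ i j h1]
      simp only [Category.assoc, ← M.map_comp, homOfLE_comp]
    · -- r r r
      rw [← N.map_comp, homOfLE_comp]
  refine ⟨{
      obj := shoeObj T M N
      map := fun {x y} f => shoeMap T M N φ ψ (leOfHom f)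
      map_id := ?_
      map_comp := ?_ }, fun i => rfl, fun i => rfl, ?_, ?_, ?_, ?_, ?_⟩
  · rintro (i | i) <;> simp [shoeMap, shoeObj]
  · intro x y z f g; exact (comp (leOfHom f) (leOfHom g)).symm
  · intro i j h; simp [shoeMap]; erw [Category.id_comp, Category.comp_id]; rfl
  · intro i j h; simp [shoeMap]; erw [Category.id_comp, Category.comp_id]; rfl
  · intro i j h; simp [shoeMap]; erw [Category.id_comp, Category.comp_id]; rfl
  · intro i j h; simp [shoeMap]; erw [Category.id_comp, Category.comp_id]; rfl
  · intro i j k h1 h2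
    rw [← Functor.map_comp]
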